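/- Let G be a k-vertex-critical graph belonging to the class H* with partition A1,...,A6 and with |A4| ≤ |A1|. Then the chromatic number of the subgraph of G induced by A6 is strictly less than |A4|. -/

import Mathlib

open SimpleGraph

/-- The co-gem: the disjoint union `P₄ + P₁`. -/
def cogem : SimpleGraph (Fin 4 ⊕ Fin 1) :=
  pathGraph 4 ⊕g (⊥ : SimpleGraph (Fin 1))

/-- The gem: the complement of the co-gem. -/
def gem : SimpleGraph (Fin 4 ⊕ Fin 1) := cogemᶜ

/-- `G` is `H`-free: no induced subgraph of `G` is isomorphic to `H`. -/
def HFree {W V : Type*} (H : SimpleGraph W) (G : SimpleGraph V) : Prop :=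
  IsEmpty (H ↪g G)

/-- `G` is `k`-vertex-critical: `χ(G) = k` and `χ(G - v) < k` for every vertex `v`. -/
def VertexCritical {V : Type*} (G : SimpleGraph V) (k : ℕ) : Prop :=
  G.chromaticNumber = k ∧ ∀ v : V, (G.induce {v}ᶜ).chromaticNumber < k

/-- `G` belongs to the class `ℋ` with the partition `A₁, …, A₆`. -/
structure ClassH {V : Type*} (G : SimpleGraph V) (A₁ A₂ A₃ A₄ A₅ A₆ : Set V) : Prop where
  gemFree : HFree gem G
  cogemFree : HFree cogem G
  ne₁ : A₁.Nonempty
  ne₂ : A₂.Nonempty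
  ne₃ : A₃.Nonempty
  ne₄ : A₄.Nonempty
  ne₅ : A₅.Nonempty
  ne₆ : A₆.Nonempty
  cover : A₁ ∪ A₂ ∪ A₃ ∪ A₄ ∪ A₅ ∪ A₆ = Set.univ
  disj : List.Pairwise Disjoint [A₁, A₂, A₃, A₄, A₅, A₆]
  comp₁ : ∀ x ∈ A₁, ∀ y ∈ A₂ ∪ A₅, G.Adj x y
  anti₁ : ∀ x ∈ A₁, ∀ y ∈ A₃ ∪ A₄ ∪ A₆, ¬ G.Adj x y
  comp₂ : ∀ x ∈ A₂, ∀ y ∈ A₁ ∪ A₃ ∪ A₆, G.Adj x y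
  anti₂ : ∀ x ∈ A₂, ∀ y ∈ A₄ ∪ A₅, ¬ G.Adj x y
  comp₃ : ∀ x ∈ A₃, ∀ y ∈ A₂ ∪ A₄ ∪ A₆, G.Adj x y
  anti₃ : ∀ x ∈ A₃, ∀ y ∈ A₁ ∪ A₅, ¬ G.Adj x y
  comp₄ : ∀ x ∈ A₄, ∀ y ∈ A₃ ∪ A₅, G.Adj x y
  anti₄ : ∀ x ∈ A₄, ∀ y ∈ A₁ ∪ A₂ ∪ A₆, ¬ G.Adj x y

/-- `G` belongs to the class `ℋ*`: it is in `ℋ` and `A₁, A₂, A₃, A₄` are cliques. -/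
structure ClassHStar {V : Type*} (G : SimpleGraph V) (A₁ A₂ A₃ A₄ A₅ A₆ : Set V)
    extends ClassH G A₁ A₂ A₃ A₄ A₅ A₆ : Prop where
  clique₁ : G.IsClique A₁
  clique₂ : G.IsClique A₂
  clique₃ : G.IsClique A₃
  clique₄ : G.IsClique A₄

theorem stmt11 (k : ℕ) (V : Type*) [Fintype V] (G : SimpleGraph V)
    (A₁ A₂ A₃ A₄ A₅ A₆ : Set V) (hH : ClassHStar G A₁ A₂ A₃ A₄ A₅ A₆)
    (hcrit : VertexCritical G k) (hcard : A₄.ncard ≤ A₁.ncard) :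
    (G.induce A₆).chromaticNumber < (A₄.ncard : ℕ∞) := by
  classical
  by_contra hcon
  push_neg at hcon
  obtain ⟨hchi, hcr⟩ := hcrit
  obtain ⟨v, hv⟩ := hH.ne₄
  obtain ⟨u₁, hu₁⟩ := hH.ne₁
  -- disjointness facts
  have hd := hH.disj
  simp only [List.pairwise_cons, List.mem_cons, List.not_mem_nil, List.mem_singleton,
    forall_eq_or_imp, forall_eq, List.Pairwise.nil, and_true] at hd
  obtain ⟨⟨d12, d13, d14, d15, d16, -⟩, ⟨d23, d24, d25, d26, -⟩, ⟨d34, d35, d36, -⟩,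
    ⟨d45, d46, -⟩, ⟨d56, -⟩, -⟩ := hd
  have hv1 : v ∉ A₁ := fun h => Set.disjoint_left.mp d14 h hv
  have hv2 : v ∉ A₂ := fun h => Set.disjoint_left.mp d24 h hv
  have hv3 : v ∉ A₃ := fun h => Set.disjoint_left.mp d34 h hv
  have hv5 : v ∉ A₅ := fun h => Set.disjoint_left.mp d45 hv h
  have hv6 : v ∉ A₆ := fun h => Set.disjoint_left.mp d46 hv h
  have hne1 : ∀ ⦃x⦄, x ∈ A₁ → x ≠ v := fun x hx h => hv1 (h ▸ hx)
  have hne2 : ∀ ⦃x⦄, x ∈ A₂ → x ≠ v := fun x hx h => hv2 (h ▸ hx)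
  have hne3 : ∀ ⦃x⦄, x ∈ A₃ → x ≠ v := fun x hx h => hv3 (h ▸ hx)
  have hne5 : ∀ ⦃x⦄, x ∈ A₅ → x ≠ v := fun x hx h => hv5 (h ▸ hx)
  have hne6 : ∀ ⦃x⦄, x ∈ A₆ → x ≠ v := fun x hx h => hv6 (h ▸ hx)
  have hu₁v : u₁ ≠ v := hne1 hu₁
  -- k ≥ 1
  have hk1 : 1 ≤ k := by
    by_contra h
    have h0 : k = 0 := by omega
    have := hcr v
    rw [h0] at this
    simp at this
  set m := k - 1 with hmdef
  have hkm : k = m + 1 := by omega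
  -- a (k-1)-coloring of G - v
  have hcolv : (G.induce ({v}ᶜ : Set V)).Colorable m := by
    rw [← chromaticNumber_le_iff_colorable]
    have h := hcr v
    rw [hkm] at h
    push_cast at h
    exact (ENat.lt_add_one_iff (by simp)).mp h
  obtain ⟨c⟩ := hcolv
  have hmem : ∀ x : V, x ≠ v → x ∈ ({v}ᶜ : Set V) := by
    intro x hx; simp [hx]
  set f : V → Fin m := fun x =>
    if h : x = v then c ⟨u₁, hmem u₁ hu₁v⟩ else c ⟨x, hmem x h⟩ with hfdef
  have hf : ∀ x y : V, x ≠ v → y ≠ v → G.Adj x y → f x ≠ f y := by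
    intro x y hx hy hadj
    simp only [hfdef, dif_neg hx, dif_neg hy]
    exact c.valid hadj
  -- if G is m-colorable, contradiction
  have hdone : G.Colorable m → False := by
    intro hcolG
    have h1 : G.chromaticNumber ≤ (m : ℕ∞) := chromaticNumber_le_iff_colorable.mpr hcolG
    rw [hchi] at h1
    have h2 : k ≤ m := by exact_mod_cast h1
    omega
  -- chromatic number of A₆ is at most the number of colors used on A₆
  have hfin6 : Fintype ↥(f '' A₆) := Fintype.ofFinite _
  have h6le : A₄.ncard ≤ (f '' A₆).ncard := by
    have c6 : (G.induce A₆).Coloring ↥(f '' A₆) :=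
      Coloring.mk (fun x => ⟨f x.1, ⟨x.1, x.2, rfl⟩⟩) (by
        intro a b hab
        simp only [ne_eq, Subtype.mk.injEq]
        exact fun h => hf a.1 b.1 (hne6 a.2) (hne6 b.2) hab (congrArg Subtype.val h))
    have hle := c6.colorable.chromaticNumber_le
    have : (A₄.ncard : ℕ∞) ≤ (Fintype.card ↥(f '' A₆) : ℕ∞) := le_trans hcon hle
    have hcast : A₄.ncard ≤ Fintype.card ↥(f '' A₆) := by exact_mod_cast this
    have hcc : Fintype.card ↥(f '' A₆) = (f '' A₆).ncard := by
      rw [← Nat.card_coe_set_eq, Nat.card_eq_fintype_card]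
    omega
  -- cardinality facts
  have hC4le : (f '' (A₄ \ {v})).ncard ≤ A₄.ncard - 1 := by
    have h1 : (f '' (A₄ \ {v})).ncard ≤ (A₄ \ {v}).ncard := Set.ncard_image_le (Set.toFinite _)
    rwa [Set.ncard_diff_singleton_of_mem hv] at h1
  have ha4pos : 0 < A₄.ncard := (Set.ncard_pos (Set.toFinite _)).mpr ⟨v, hv⟩
  have hC1card : (f '' A₁).ncard = A₁.ncard := by
    apply Set.ncard_image_of_injOn
    intro x hx y hy hxy
    by_contra hne
    exact hf x y (hne1 hx) (hne1 hy) (hH.clique₁ hx hy hne) hxy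
  -- pick α
  obtain ⟨α, hα6, hα4⟩ : ∃ α ∈ f '' A₆, α ∉ f '' (A₄ \ {v}) := by
    rw [← Set.not_subset]
    intro hsub
    have := Set.ncard_le_ncard hsub (Set.toFinite _)
    omega
  -- pick γ
  obtain ⟨γ, hγ1, hγ4⟩ : ∃ γ ∈ f '' A₁, γ ∉ f '' (A₄ \ {v}) := by
    rw [← Set.not_subset]
    intro hsub
    have := Set.ncard_le_ncard hsub (Set.toFinite _)
    omega
  -- color exclusion facts from complete pairs
  have hdiff : ∀ (B C : Set V), (∀ x ∈ B, ∀ y ∈ C, G.Adj x y) → v ∉ B → v ∉ C →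
      ∀ δ : Fin m, δ ∈ f '' B → δ ∉ f '' C := by
    rintro B C hBC hvB hvC δ ⟨x, hx, rfl⟩ ⟨y, hy, hfy⟩
    exact hf x y (fun h => hvB (h ▸ hx)) (fun h => hvC (h ▸ hy)) (hBC x hx y hy) hfy.symm
  have h12 : ∀ δ : Fin m, δ ∈ f '' A₁ → δ ∉ f '' A₂ :=
    hdiff A₁ A₂ (fun x hx y hy => hH.comp₁ x hx y (Or.inl hy)) hv1 hv2
  have h15 : ∀ δ : Fin m, δ ∈ f '' A₁ → δ ∉ f '' A₅ :=
    hdiff A₁ A₅ (fun x hx y hy => hH.comp₁ x hx y (Or.inr hy)) hv1 hv5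
  have h62 : ∀ δ : Fin m, δ ∈ f '' A₆ → δ ∉ f '' A₂ :=
    hdiff A₆ A₂ (fun x hx y hy => (hH.comp₂ y hy x (Or.inr hx)).symm) hv6 hv2
  have h63 : ∀ δ : Fin m, δ ∈ f '' A₆ → δ ∉ f '' A₃ :=
    hdiff A₆ A₃ (fun x hx y hy => (hH.comp₃ y hy x (Or.inr hx)).symm) hv6 hv3
  have h36 : ∀ δ : Fin m, δ ∈ f '' A₃ → δ ∉ f '' A₆ :=
    hdiff A₃ A₆ (fun x hx y hy => hH.comp₃ x hx y (Or.inr hy)) hv3 hv6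
  have hα3 : α ∉ f '' A₃ := fun h => h36 α h hα6
  -- extension lemma
  have hext : ∀ δ : Fin m, δ ∉ f '' A₃ → δ ∉ f '' (A₄ \ {v}) → δ ∉ f '' A₅ → False := by
    intro δ h3 h4 h5
    apply hdone
    refine ⟨Coloring.mk (fun x => if x = v then δ else f x) ?_⟩
    intro x y hadj
    beta_reduce
    by_cases hx : x = v <;> by_cases hy : y = v
    · exact absurd (hx.trans hy.symm) hadj.ne
    · rw [if_pos hx, if_neg hy]
      intro heq
      have hadjv : G.Adj v y := hx ▸ hadj
      have hyu : y ∈ A₁ ∪ A₂ ∪ A₃ ∪ A₄ ∪ A₅ ∪ A₆ := hH.cover ▸ Set.mem_univ y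
      rcases hyu with ((((h | h) | h) | h) | h) | h
      · exact hH.anti₁ y h v (Or.inl (Or.inr hv)) hadjv.symm
      · exact hH.anti₂ y h v (Or.inl hv) hadjv.symm
      · exact h3 ⟨y, h, heq.symm⟩
      · exact h4 ⟨y, ⟨h, hy⟩, heq.symm⟩
      · exact h5 ⟨y, h, heq.symm⟩
      · exact hH.anti₄ v hv y (Or.inr h) hadjv
    · rw [if_neg hx, if_pos hy]
      intro heq
      have hadjv : G.Adj x v := hy ▸ hadj
      have hxu : x ∈ A₁ ∪ A₂ ∪ A₃ ∪ A₄ ∪ A₅ ∪ A₆ := hH.cover ▸ Set.mem_univ x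
      rcases hxu with ((((h | h) | h) | h) | h) | h
      · exact hH.anti₁ x h v (Or.inl (Or.inr hv)) hadjv
      · exact hH.anti₂ x h v (Or.inl hv) hadjv
      · exact h3 ⟨x, h, heq⟩
      · exact h4 ⟨x, ⟨h, hx⟩, heq⟩
      · exact h5 ⟨x, h, heq⟩
      · exact hH.anti₄ v hv x (Or.inr h) hadjv.symm
    · simp only [if_neg hx, if_neg hy]
      exact hf x y hx hy hadj
  -- case: α not used on A₅ — direct extension
  by_cases hα5 : α ∈ f '' A₅
  swap
  · exact hext α hα3 hα4 hα5
  -- case: γ not on A₃ — direct extension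
  by_cases hγ3 : γ ∈ f '' A₃
  swap
  · exact hext γ hγ3 hγ4 (h15 γ hγ1)
  -- Kempe swap
  have hαγ : α ≠ γ := fun h => h15 γ hγ1 (h ▸ hα5)
  have hmemα : ∀ x : V, x ≠ v → f x = α → x ∈ A₅ ∨ x ∈ A₆ := by
    intro x hx hfx
    have hxu : x ∈ A₁ ∪ A₂ ∪ A₃ ∪ A₄ ∪ A₅ ∪ A₆ := hH.cover ▸ Set.mem_univ x
    rcases hxu with ((((h | h) | h) | h) | h) | h
    · exact absurd hα5 (h15 α ⟨x, h, hfx⟩)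
    · exact absurd ⟨x, h, hfx⟩ (h62 α hα6)
    · exact absurd ⟨x, h, hfx⟩ hα3
    · exact absurd ⟨x, ⟨h, hx⟩, hfx⟩ hα4
    · exact Or.inl h
    · exact Or.inr h
  have hmemγ : ∀ x : V, x ≠ v → f x = γ → x ∈ A₁ ∨ x ∈ A₃ := by
    intro x hx hfx
    have hxu : x ∈ A₁ ∪ A₂ ∪ A₃ ∪ A₄ ∪ A₅ ∪ A₆ := hH.cover ▸ Set.mem_univ x
    rcases hxu with ((((h | h) | h) | h) | h) | h
    · exact Or.inl h
    · exact absurd ⟨x, h, hfx⟩ (h12 γ hγ1)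
    · exact Or.inr h
    · exact absurd ⟨x, ⟨h, hx⟩, hfx⟩ hγ4
    · exact absurd ⟨x, h, hfx⟩ (h15 γ hγ1)
    · exact absurd ⟨x, h, hfx⟩ (h36 γ hγ3)
  apply hdone
  refine ⟨Coloring.mk (fun x =>
    if x ∈ A₅ ∧ f x = α then γ else if x ∈ A₁ ∧ f x = γ then α else if x = v then α else f x) ?_⟩
  intro x y hadj heq
  beta_reduce at heq
  have hgv : ∀ z : V, z = v →
      (if z ∈ A₅ ∧ f z = α then γ else if z ∈ A₁ ∧ f z = γ then α else if z = v then α else f z)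
        = α := by
    intro z hz
    subst hz
    rw [if_neg (fun h => hv5 h.1), if_neg (fun h => hv1 h.1), if_pos rfl]
  by_cases hx5 : x ∈ A₅ ∧ f x = α <;> by_cases hy5 : y ∈ A₅ ∧ f y = α
  · -- both in A₅ with color α: adjacent, same old color
    exact hf x y (hne5 hx5.1) (hne5 hy5.1) hadj (hx5.2.trans hy5.2.symm)
  · -- x swapped to γ
    rw [if_pos hx5] at heq
    by_cases hy1 : y ∈ A₁ ∧ f y = γ
    · rw [if_neg hy5, if_pos hy1] at heq
      exact hαγ heq.symm
    · by_cases hyv : y = v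
      · rw [hgv y hyv] at heq
        exact hαγ heq.symm
      · rw [if_neg hy5, if_neg hy1, if_neg hyv] at heq
        rcases hmemγ y hyv heq.symm with h | h
        · exact hy1 ⟨h, heq.symm⟩
        · exact hH.anti₃ y h x (Or.inr hx5.1) hadj.symm
  · -- y swapped to γ
    rw [if_pos hy5] at heq
    by_cases hx1 : x ∈ A₁ ∧ f x = γ
    · rw [if_neg hx5, if_pos hx1] at heq
      exact hαγ heq
    · by_cases hxv : x = v
      · rw [hgv x hxv] at heq
        exact hαγ heq
      · rw [if_neg hx5, if_neg hx1, if_neg hxv] at heq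
        rcases hmemγ x hxv heq with h | h
        · exact hx1 ⟨h, heq⟩
        · exact hH.anti₃ x h y (Or.inr hy5.1) hadj
  · rw [if_neg hx5, if_neg hy5] at heq
    by_cases hx1 : x ∈ A₁ ∧ f x = γ <;> by_cases hy1 : y ∈ A₁ ∧ f y = γ
    · -- both in A₁ with color γ
      exact hf x y (hne1 hx1.1) (hne1 hy1.1) hadj (hx1.2.trans hy1.2.symm)
    · rw [if_pos hx1] at heq
      by_cases hyv : y = v
      · exact hH.anti₁ x hx1.1 v (Or.inl (Or.inr hv)) (hyv ▸ hadj)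
      · rw [if_neg hy1, if_neg hyv] at heq
        rcases hmemα y hyv heq.symm with h | h
        · exact hy5 ⟨h, heq.symm⟩
        · exact hH.anti₁ x hx1.1 y (Or.inr h) hadj
    · rw [if_pos hy1] at heq
      by_cases hxv : x = v
      · exact hH.anti₁ y hy1.1 v (Or.inl (Or.inr hv)) ((hxv ▸ hadj).symm)
      · rw [if_neg hx1, if_neg hxv] at heq
        rcases hmemα x hxv heq with h | h
        · exact hx5 ⟨h, heq⟩
        · exact hH.anti₁ y hy1.1 x (Or.inr h) hadj.symm
    · rw [if_neg hx1, if_neg hy1] at heq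
      by_cases hxv : x = v <;> by_cases hyv : y = v
      · exact hadj.ne (hxv.trans hyv.symm)
      · rw [if_pos hxv, if_neg hyv] at heq
        have hadjv : G.Adj v y := hxv ▸ hadj
        have hyu : y ∈ A₁ ∪ A₂ ∪ A₃ ∪ A₄ ∪ A₅ ∪ A₆ := hH.cover ▸ Set.mem_univ y
        rcases hyu with ((((h | h) | h) | h) | h) | h
        · exact hH.anti₁ y h v (Or.inl (Or.inr hv)) hadjv.symm
        · exact hH.anti₂ y h v (Or.inl hv) hadjv.symm
        · exact hα3 ⟨y, h, heq.symm⟩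
        · exact hα4 ⟨y, ⟨h, hyv⟩, heq.symm⟩
        · exact hy5 ⟨h, heq.symm⟩
        · exact hH.anti₄ v hv y (Or.inr h) hadjv
      · rw [if_neg hxv, if_pos hyv] at heq
        have hadjv : G.Adj x v := hyv ▸ hadj
        have hxu : x ∈ A₁ ∪ A₂ ∪ A₃ ∪ A₄ ∪ A₅ ∪ A₆ := hH.cover ▸ Set.mem_univ x
        rcases hxu with ((((h | h) | h) | h) | h) | h
        · exact hH.anti₁ x h v (Or.inl (Or.inr hv)) hadjv
        · exact hH.anti₂ x h v (Or.inl hv) hadjv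
        · exact hα3 ⟨x, h, heq⟩
        · exact hα4 ⟨x, ⟨h, hxv⟩, heq⟩
        · exact hx5 ⟨h, heq⟩
        · exact hH.anti₄ v hv x (Or.inr h) hadjv.symm
      · rw [if_neg hxv, if_neg hyv] at heq
        exact hf x y hxv hyv hadj heq
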